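/- Let θ ∈ ℝ^N be a nonnegative vector, L+S a positive integer, and ρ > 0 with Σ_n θ[n] = (L+S)·ρ. There exist a finite G, a nonnegative vector γ ∈ ℝ^G with Σ_g γ[g] = ρ, and a {0,1}-valued G×N matrix μ with exactly L+S ones per row, such that θ = γ·μ, if and only if θ[n] ≤ ρ for all n ∈ [N]. -/

import Mathlib

/-- Decomposition predicate for the Binary-(θ,ρ)-Division problem. -/
def BinDecomp (K N : ℕ) (θ : Fin N → ℝ) (ρ : ℝ) : Prop :=
  ∃ (G : ℕ) (γ : Fin G → ℝ) (μ : Fin G → Fin N → ℝ),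
    (∀ g, 0 ≤ γ g) ∧ (∑ g, γ g = ρ) ∧
    (∀ g n, μ g n = 0 ∨ μ g n = 1) ∧
    (∀ g, ∑ n, μ g n = (K : ℝ)) ∧
    (∀ n, θ n = ∑ g, γ g * μ g n)

lemma binDecomp_base (K N : ℕ) (θ : Fin N → ℝ) (ρ : ℝ) (hρ : 0 < ρ)
    (hvals : ∀ n, θ n = 0 ∨ θ n = ρ) (hsum : ∑ n, θ n = (K : ℝ) * ρ) :
    BinDecomp K N θ ρ := by
  refine ⟨1, fun _ => ρ, fun _ n => θ n / ρ, fun _ => hρ.le, by simp, ?_, ?_, ?_⟩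
  · intro g n
    rcases hvals n with h | h
    · left; show θ n / ρ = 0; rw [h, zero_div]
    · right; show θ n / ρ = 1; rw [h]; exact div_self hρ.ne'
  · intro g
    show ∑ n, θ n / ρ = (K : ℝ)
    rw [← Finset.sum_div, hsum, mul_div_assoc, div_self hρ.ne', mul_one]
  · intro n
    show θ n = ∑ _g : Fin 1, ρ * (θ n / ρ)
    rw [Fin.sum_univ_one]
    field_simp

lemma binDecomp_aux (K N : ℕ) (hK : 0 < K) :
    ∀ (c : ℕ) (θ : Fin N → ℝ) (ρ : ℝ), 0 < ρ → (∀ n, 0 ≤ θ n) →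
      (∀ n, θ n ≤ ρ) → (∑ n, θ n = (K : ℝ) * ρ) →
      (Finset.univ.filter fun n => 0 < θ n ∧ θ n < ρ).card ≤ c →
      BinDecomp K N θ ρ := by
  intro c
  induction c with
  | zero =>
    intro θ ρ hρ h0 h1 hsum hcard
    apply binDecomp_base K N θ ρ hρ _ hsum
    intro n
    have hn : ¬ (0 < θ n ∧ θ n < ρ) := by
      intro h
      have : n ∈ Finset.univ.filter fun n => 0 < θ n ∧ θ n < ρ := by
        simp [h.1, h.2]
      have := Finset.card_pos.mpr ⟨n, this⟩
      omega
    rcases lt_or_eq_of_le (h0 n) with h | h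
    · rcases lt_or_eq_of_le (h1 n) with h' | h'
      · exact absurd ⟨h, h'⟩ hn
      · right; exact h'
    · left; exact h.symm
  | succ c ih =>
    intro θ ρ hρ h0 h1 hsum hcard
    set band := Finset.univ.filter fun n => 0 < θ n ∧ θ n < ρ with hband
    by_cases hbe : band = ∅
    · -- band empty: same as base case
      apply binDecomp_base K N θ ρ hρ _ hsum
      intro n
      have hn : n ∉ band := by rw [hbe]; exact Finset.notMem_empty n
      rw [hband, Finset.mem_filter] at hn
      push_neg at hn
      rcases lt_or_eq_of_le (h0 n) with h | h
      · rcases lt_or_eq_of_le (h1 n) with h' | h'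
        · exact absurd (hn (Finset.mem_univ n) h) (not_le.mpr h')
        · right; exact h'
      · left; exact h.symm
    · obtain ⟨b, hb⟩ := Finset.nonempty_iff_ne_empty.mpr hbe
      rw [hband, Finset.mem_filter] at hb
      obtain ⟨-, hb0, hbρ⟩ := hb
      -- E : set of maximal entries, Supp : support
      set E := Finset.univ.filter (fun n => θ n = ρ) with hE
      set Supp := Finset.univ.filter (fun n => 0 < θ n) with hSupp
      have hES : E ⊆ Supp := by
        intro n hn
        rw [hE, Finset.mem_filter] at hn
        rw [hSupp, Finset.mem_filter]
        exact ⟨Finset.mem_univ n, hn.2 ▸ hρ⟩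
      have hEcard : E.card ≤ K := by
        have h1' : ∑ n ∈ E, θ n = (E.card : ℝ) * ρ := by
          have hall : ∀ n ∈ E, θ n = ρ := by
            intro n hn; rw [hE, Finset.mem_filter] at hn; exact hn.2
          rw [Finset.sum_congr rfl hall, Finset.sum_const, nsmul_eq_mul]
        have h2' : ∑ n ∈ E, θ n ≤ ∑ n, θ n :=
          Finset.sum_le_sum_of_subset_of_nonneg (Finset.subset_univ E) (fun n _ _ => h0 n)
        have : (E.card : ℝ) * ρ ≤ (K : ℝ) * ρ := by rw [← h1', ← hsum]; exact h2' 
        exact_mod_cast le_of_mul_le_mul_right this hρ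
      have hScard : K ≤ Supp.card := by
        have h1' : ∑ n, θ n = ∑ n ∈ Supp, θ n := by
          refine (Finset.sum_subset (Finset.subset_univ Supp) ?_).symm
          intro n _ hn
          rw [hSupp, Finset.mem_filter] at hn
          push_neg at hn
          exact le_antisymm (hn (Finset.mem_univ n)) (h0 n)
        have h2' : ∑ n ∈ Supp, θ n ≤ (Supp.card : ℝ) * ρ := by
          calc ∑ n ∈ Supp, θ n ≤ ∑ _n ∈ Supp, ρ := Finset.sum_le_sum (fun n _ => h1 n)
          _ = (Supp.card : ℝ) * ρ := by simp [mul_comm]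
        have : (K : ℝ) * ρ ≤ (Supp.card : ℝ) * ρ := by rw [← hsum, h1']; exact h2' 
        exact_mod_cast le_of_mul_le_mul_right this hρ
      -- choose A with E ⊆ A ⊆ Supp, |A| = K
      obtain ⟨A, hEA, hAS, hAcard⟩ :=
        Finset.exists_subsuperset_card_eq (n := K - E.card + E.card) hES (by omega) (by omega)
      have hAcard : A.card = K := by rw [hAcard]; omega
      have hApos : ∀ n ∈ A, 0 < θ n := by
        intro n hn
        have := hAS hn
        rw [hSupp, Finset.mem_filter] at this
        exact this.2
      have hAρ : ∀ n, n ∉ A → θ n < ρ := by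
        intro n hn
        rcases lt_or_eq_of_le (h1 n) with h | h
        · exact h
        · exact absurd (hEA (by rw [hE, Finset.mem_filter]; exact ⟨Finset.mem_univ n, h⟩)) hn
      have hNuniv : (Finset.univ : Finset (Fin N)).Nonempty := by
        obtain ⟨a, ha⟩ := Finset.card_pos.mp (hAcard ▸ hK)
        exact ⟨a, Finset.mem_univ a⟩
      set f : Fin N → ℝ := fun n => if n ∈ A then θ n else ρ - θ n with hf
      set ε := Finset.univ.inf' hNuniv f with hε
      obtain ⟨n0, -, hn0⟩ := Finset.exists_mem_eq_inf' hNuniv f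
      have hεle : ∀ n, ε ≤ f n := fun n => Finset.inf'_le f (Finset.mem_univ n)
      have hεn0 : ε = f n0 := hn0
      have hfpos : ∀ n, 0 < f n := by
        intro n
        rw [hf]
        by_cases hn : n ∈ A
        · simpa [hn] using hApos n hn
        · simpa [hn] using sub_pos.mpr (hAρ n hn)
      have hεpos : 0 < ε := by rw [hεn0]; exact hfpos n0
      have hερ : ε < ρ := by
        by_cases hbA : b ∈ A
        · have := hεle b; rw [hf] at this; simp only [hbA, if_true] at this; linarith
        · have := hεle b; rw [hf] at this; simp only [hbA, if_false] at this; linarith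
      -- new vector
      set θ' : Fin N → ℝ := fun n => if n ∈ A then θ n - ε else θ n with hθ'
      set ρ' := ρ - ε with hρ'def
      have hρ' : 0 < ρ' := by rw [hρ'def]; linarith
      have h0' : ∀ n, 0 ≤ θ' n := by
        intro n
        rw [hθ']
        by_cases hn : n ∈ A
        · have := hεle n; rw [hf] at this; simp only [hn, if_true] at this ⊢; linarith
        · simp only [hn, if_false]; exact h0 n
      have h1' : ∀ n, θ' n ≤ ρ' := by
        intro n
        rw [hθ', hρ'def]
        by_cases hn : n ∈ A
        · simp only [hn, if_true]; linarith [h1 n]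
        · have := hεle n; rw [hf] at this; simp only [hn, if_false] at this ⊢; linarith
      have hsum' : ∑ n, θ' n = (K : ℝ) * ρ' := by
        have : ∑ n, θ' n = ∑ n, (θ n - if n ∈ A then ε else 0) := by
          apply Finset.sum_congr rfl
          intro n _
          rw [hθ']
          by_cases hn : n ∈ A <;> simp [hn]
        rw [this, Finset.sum_sub_distrib, hsum, Finset.sum_ite_mem, Finset.univ_inter,
          Finset.sum_const, hAcard, hρ'def]
        push_cast
        ring
      -- band decreases
      have hn0mem : n0 ∈ band := by
        rw [hband, Finset.mem_filter]
        refine ⟨Finset.mem_univ n0, ?_⟩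
        rw [hf] at hεn0
        by_cases hn : n0 ∈ A
        · simp only [hn, if_true] at hεn0
          constructor <;> linarith
        · simp only [hn, if_false] at hεn0
          constructor <;> linarith
      have hn0' : θ' n0 = 0 ∨ θ' n0 = ρ' := by
        rw [hθ']
        have hεn0' := hεn0
        rw [hf] at hεn0' 
        by_cases hn : n0 ∈ A
        · left
          simp only [hn, if_true] at hεn0' ⊢
          linarith
        · right
          simp only [hn, if_false] at hεn0' ⊢
          rw [hρ'def]
          linarith
      have hband' : (Finset.univ.filter fun n => 0 < θ' n ∧ θ' n < ρ').card ≤ c := by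
        have hsub : (Finset.univ.filter fun n => 0 < θ' n ∧ θ' n < ρ') ⊆ band.erase n0 := by
          intro n hn
          rw [Finset.mem_filter] at hn
          obtain ⟨-, hn1, hn2⟩ := hn
          rw [Finset.mem_erase]
          constructor
          · rintro rfl
            rcases hn0' with h | h
            · rw [h] at hn1; linarith
            · rw [h] at hn2; linarith
          · rw [hband, Finset.mem_filter]
            refine ⟨Finset.mem_univ n, ?_⟩
            rw [hθ'] at hn1 hn2
            by_cases hA : n ∈ A
            · simp only [hA, if_true] at hn1 hn2
              rw [hρ'def] at hn2
              constructor <;> linarith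
            · simp only [hA, if_false] at hn1 hn2
              rw [hρ'def] at hn2
              constructor <;> linarith
        have h1'' := Finset.card_le_card hsub
        have h3'' : (band.erase n0).card = band.card - 1 := Finset.card_erase_of_mem hn0mem
        have h4'' : 0 < band.card := Finset.card_pos.mpr ⟨n0, hn0mem⟩
        omega
      -- apply IH and extend
      obtain ⟨G, γ, μ, hγ0, hγsum, hμ01, hμrow, hdec⟩ := ih θ' ρ' hρ' h0' h1' hsum' hband'
      refine ⟨G + 1, Fin.cons ε γ, Fin.cons (fun n => if n ∈ A then (1:ℝ) else 0) μ,
        ?_, ?_, ?_, ?_, ?_⟩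
      · intro g
        refine Fin.cases ?_ ?_ g
        · simpa using hεpos.le
        · intro i; simpa using hγ0 i
      · rw [Fin.sum_cons, hγsum, hρ'def]; ring
      · intro g n
        refine Fin.cases ?_ ?_ g
        · simp only [Fin.cons_zero]
          by_cases hn : n ∈ A <;> simp [hn]
        · intro i; simpa using hμ01 i n
      · intro g
        refine Fin.cases ?_ ?_ g
        · simp only [Fin.cons_zero, Finset.sum_ite_mem, Finset.univ_inter,
            Finset.sum_const, hAcard, nsmul_eq_mul, mul_one]
        · intro i; simpa using hμrow i
      · intro n
        rw [Fin.sum_univ_succ]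
        simp only [Fin.cons_zero, Fin.cons_succ]
        rw [← hdec n, hθ']
        by_cases hn : n ∈ A <;> simp [hn]

/-- existence condition for the Binary-(θ,ρ)-Division Problem:
a decomposition θ = γ·μ with γ ≥ 0 summing to ρ and μ a {0,1}-matrix having
exactly L+S ones per row exists iff θ[n] ≤ ρ for all n. -/
theorem stmt2 (L S N : ℕ) (hLS : 0 < L + S)
    (θ : Fin N → ℝ) (hθ0 : ∀ n, 0 ≤ θ n)
    (ρ : ℝ) (hρ : 0 < ρ) (hsum : ∑ n, θ n = (L + S : ℝ) * ρ) :
    (∃ (G : ℕ) (γ : Fin G → ℝ) (μ : Fin G → Fin N → ℝ),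
      (∀ g, 0 ≤ γ g) ∧ (∑ g, γ g = ρ) ∧
      (∀ g n, μ g n = 0 ∨ μ g n = 1) ∧
      (∀ g, ∑ n, μ g n = (L + S : ℝ)) ∧
      (∀ n, θ n = ∑ g, γ g * μ g n))
    ↔ (∀ n, θ n ≤ ρ) := by
  constructor
  · rintro ⟨G, γ, μ, hγ0, hγsum, hμ01, hμrow, hdec⟩ n
    rw [hdec n, ← hγsum]
    apply Finset.sum_le_sum
    intro g _
    rcases hμ01 g n with h | h
    · rw [h, mul_zero]; exact hγ0 g
    · rw [h, mul_one]
  · intro hle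
    have hsum' : ∑ n, θ n = ((L + S : ℕ) : ℝ) * ρ := by push_cast; exact hsum
    obtain ⟨G, γ, μ, hγ0, hγsum, hμ01, hμrow, hdec⟩ :=
      binDecomp_aux (L + S) N hLS N θ ρ hρ hθ0 hle hsum'
        (le_trans (Finset.card_filter_le _ _) (by simp))
    refine ⟨G, γ, μ, hγ0, hγsum, hμ01, fun g => ?_, hdec⟩
    rw [hμrow g]; push_cast; ring
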